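/- Define η(φ) = (1+φ)·∫_φ^∞ e^{2/w}/(w²·(1+w)²) dw for φ > 0. Then: (i) the integral converges for every φ > 0, so η is well defined; (ii) η is twice differentiable on (0,∞) and satisfies (1/2)·φ²·η''(φ) + (1+φ)·η'(φ) = η(φ) for all φ > 0; (iii) η is strictly positive and strictly decreasing on (0,∞); (iv) η(φ) → 0 as φ → ∞ and η(φ) → ∞ as φ → 0+. -/

import Mathlib

open MeasureTheory

/-- The decreasing fundamental solution `η_X` of the Wiener-only disorder problem
(Section 6.4, with `λ = μ = 1`): `η(φ) = (1+φ) ∫_φ^∞ e^(2/w) / (w² (1+w)²) dw`. -/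
noncomputable def etaX (φ : ℝ) : ℝ :=
  (1 + φ) * ∫ w in Set.Ioi φ, Real.exp (2 / w) / (w ^ 2 * (1 + w) ^ 2)

noncomputable def fAnti (w : ℝ) : ℝ := Real.exp (2 / w) * (w - 1) / (2 * (1 + w))

lemma fAnti_hasDerivAt {w : ℝ} (hw : 0 < w) :
    HasDerivAt fAnti (Real.exp (2 / w) / (w ^ 2 * (1 + w) ^ 2)) w := by
  have hw0 : w ≠ 0 := hw.ne'
  have hw1 : (1 : ℝ) + w ≠ 0 := by positivity
  have h1 : HasDerivAt (fun x : ℝ => 2 / x) (-(2 / w ^ 2)) w := by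
    simpa [div_eq_mul_inv, sq] using ((hasDerivAt_inv hw0).const_mul (2:ℝ))
  have h2 : HasDerivAt (fun x : ℝ => Real.exp (2 / x)) (Real.exp (2 / w) * (-(2 / w ^ 2))) w :=
    h1.exp
  have h3 : HasDerivAt (fun x : ℝ => Real.exp (2 / x) * (x - 1))
      (Real.exp (2 / w) * (-(2 / w ^ 2)) * (w - 1) + Real.exp (2 / w) * 1) w :=
    h2.mul ((hasDerivAt_id w).sub_const 1)
  have h4 : HasDerivAt (fun x : ℝ => 2 * (1 + x)) 2 w := by
    simpa using ((hasDerivAt_id w).const_add 1).const_mul (2:ℝ)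
  have := h3.div h4 (by positivity)
  refine this.congr_deriv ?_
  field_simp
  ring

lemma inv_tendsto0 : Filter.Tendsto (fun w : ℝ => 2 / w) Filter.atTop (nhds 0) := by
  simpa [Filter.Tendsto, div_eq_mul_inv] using tendsto_inv_atTop_zero.const_mul (2:ℝ)

lemma fAnti_tendsto : Filter.Tendsto fAnti Filter.atTop (nhds (1 / 2 : ℝ)) := by
  have h1 : Filter.Tendsto (fun w : ℝ => Real.exp (2 / w)) Filter.atTop (nhds 1) := by
    simpa [Function.comp_def] using (Real.continuous_exp.tendsto 0).comp inv_tendsto0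
  have hinv : Filter.Tendsto (fun w : ℝ => 1 / w) Filter.atTop (nhds (0:ℝ)) := by
    simpa [div_eq_mul_inv] using tendsto_inv_atTop_zero.const_mul (1:ℝ)
  have h2 : Filter.Tendsto (fun w : ℝ => (w - 1) / (2 * (1 + w))) Filter.atTop
      (nhds (1 / 2 : ℝ)) := by
    have hnum : Filter.Tendsto (fun w : ℝ => 1 - 1 / w) Filter.atTop (nhds 1) := by
      simpa using (tendsto_const_nhds (x := (1:ℝ)) (f := Filter.atTop)).sub hinv
    have hden : Filter.Tendsto (fun w : ℝ => 2 * (1 / w + 1)) Filter.atTop (nhds 2) := by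
      have := (hinv.add (tendsto_const_nhds (x := (1:ℝ)))).const_mul (2:ℝ)
      simpa using this
    have := hnum.div hden (by norm_num)
    refine this.congr' ?_
    filter_upwards [Filter.eventually_gt_atTop (0 : ℝ)] with w hw
    have hw0 : w ≠ 0 := hw.ne'
    have h1w : (1:ℝ) + w ≠ 0 := by positivity
    simp only [Pi.div_apply]
    field_simp
  have := h1.mul h2
  simp only [one_mul] at this
  refine this.congr (fun w => ?_)
  unfold fAnti
  ring

lemma g_integrableOn {φ : ℝ} (hφ : 0 < φ) :
    IntegrableOn (fun w : ℝ => Real.exp (2 / w) / (w ^ 2 * (1 + w) ^ 2)) (Set.Ioi φ) := by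
  refine integrableOn_Ioi_deriv_of_nonneg ?_ (fun x hx => fAnti_hasDerivAt (hφ.trans hx))
    (fun x hx => by positivity) fAnti_tendsto
  exact (fAnti_hasDerivAt hφ).continuousAt.continuousWithinAt

lemma g_integral {φ : ℝ} (hφ : 0 < φ) :
    ∫ w in Set.Ioi φ, Real.exp (2 / w) / (w ^ 2 * (1 + w) ^ 2) = 1 / 2 - fAnti φ :=
  integral_Ioi_of_hasDerivAt_of_nonneg (fAnti_hasDerivAt hφ).continuousAt.continuousWithinAt
    (fun x hx => fAnti_hasDerivAt (hφ.trans hx)) (fun x hx => by positivity) fAnti_tendsto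

noncomputable def etaC (φ : ℝ) : ℝ := (1 + φ) / 2 + (1 - φ) * Real.exp (2 / φ) / 2

noncomputable def etaX' (φ : ℝ) : ℝ :=
  1 / 2 - Real.exp (2 / φ) * (φ ^ 2 - 2 * φ + 2) / (2 * φ ^ 2)

noncomputable def etaX'' (φ : ℝ) : ℝ := 2 * Real.exp (2 / φ) / φ ^ 4

lemma etaX_eq {φ : ℝ} (hφ : 0 < φ) : etaX φ = etaC φ := by
  have h1φ : (1:ℝ) + φ ≠ 0 := by positivity
  rw [etaX, g_integral hφ, etaC, fAnti]
  field_simp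
  ring

lemma exp_hasDerivAt {φ : ℝ} (hφ : 0 < φ) :
    HasDerivAt (fun x : ℝ => Real.exp (2 / x)) (Real.exp (2 / φ) * (-(2 / φ ^ 2))) φ := by
  have h1 : HasDerivAt (fun x : ℝ => 2 / x) (-(2 / φ ^ 2)) φ := by
    simpa [div_eq_mul_inv, sq] using ((hasDerivAt_inv hφ.ne').const_mul (2:ℝ))
  exact h1.exp

lemma etaC_hasDerivAt {φ : ℝ} (hφ : 0 < φ) : HasDerivAt etaC (etaX' φ) φ := by
  have h3 : HasDerivAt (fun x : ℝ => (1 - x) * Real.exp (2 / x) / 2)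
      (((-1) * Real.exp (2 / φ) + (1 - φ) * (Real.exp (2 / φ) * (-(2 / φ ^ 2)))) / 2) φ := by
    exact (((hasDerivAt_id φ).const_sub 1).mul (exp_hasDerivAt hφ)).div_const 2
  have h4 : HasDerivAt (fun x : ℝ => (1 + x) / 2) (1 / 2) φ := by
    simpa using ((hasDerivAt_id φ).const_add 1).div_const 2
  have := h4.add h3
  refine this.congr_deriv ?_
  unfold etaX'
  field_simp
  ring

lemma etaX'_hasDerivAt {φ : ℝ} (hφ : 0 < φ) : HasDerivAt etaX' (etaX'' φ) φ := by
  have hnum : HasDerivAt (fun x : ℝ => Real.exp (2 / x) * (x ^ 2 - 2 * x + 2))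
      (Real.exp (2 / φ) * (-(2 / φ ^ 2)) * (φ ^ 2 - 2 * φ + 2)
        + Real.exp (2 / φ) * (2 * φ - 2)) φ := by
    have hp : HasDerivAt (fun x : ℝ => x ^ 2 - 2 * x + 2) (2 * φ - 2) φ := by
      have := (((hasDerivAt_pow 2 φ)).sub ((hasDerivAt_id φ).const_mul 2)).add_const 2
      simpa [mul_comm] using this
    exact (exp_hasDerivAt hφ).mul hp
  have hden : HasDerivAt (fun x : ℝ => 2 * x ^ 2) (4 * φ) φ := by
    have := (hasDerivAt_pow 2 φ).const_mul (2:ℝ)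
    norm_num at this ⊢
    refine this.congr_deriv ?_
    ring
  have := (hnum.div hden (by positivity)).const_sub (1/2 : ℝ)
  refine this.congr_deriv ?_
  unfold etaX''
  field_simp
  ring

lemma etaX_eventuallyEq {φ : ℝ} (hφ : 0 < φ) : etaX =ᶠ[nhds φ] etaC := by
  filter_upwards [Ioi_mem_nhds hφ] with x hx using etaX_eq hx

lemma deriv_etaX_eq {φ : ℝ} (hφ : 0 < φ) : deriv etaX φ = etaX' φ := by
  rw [(etaX_eventuallyEq hφ).deriv_eq, (etaC_hasDerivAt hφ).deriv]

lemma deriv2_etaX_eq {φ : ℝ} (hφ : 0 < φ) : deriv (deriv etaX) φ = etaX'' φ := by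
  have h : deriv etaX =ᶠ[nhds φ] etaX' := by
    filter_upwards [Ioi_mem_nhds hφ] with x hx using deriv_etaX_eq hx
  rw [h.deriv_eq, (etaX'_hasDerivAt hφ).deriv]

lemma etaX_diff {φ : ℝ} (hφ : 0 < φ) : DifferentiableAt ℝ etaX φ :=
  (etaC_hasDerivAt hφ).differentiableAt.congr_of_eventuallyEq (etaX_eventuallyEq hφ)

lemma deriv_etaX_diff {φ : ℝ} (hφ : 0 < φ) : DifferentiableAt ℝ (deriv etaX) φ := by
  have h : deriv etaX =ᶠ[nhds φ] etaX' := by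
    filter_upwards [Ioi_mem_nhds hφ] with x hx using deriv_etaX_eq hx
  exact (etaX'_hasDerivAt hφ).differentiableAt.congr_of_eventuallyEq h

lemma etaX_ode {φ : ℝ} (hφ : 0 < φ) :
    1 / 2 * φ ^ 2 * deriv (deriv etaX) φ + (1 + φ) * deriv etaX φ = etaX φ := by
  rw [deriv2_etaX_eq hφ, deriv_etaX_eq hφ, etaX_eq hφ]
  unfold etaX'' etaX' etaC
  field_simp
  ring

lemma etaX'_neg {φ : ℝ} (hφ : 0 < φ) : etaX' φ < 0 := by
  have hexp : 1 + 2 / φ + (2 / φ) ^ 2 / 2 ≤ Real.exp (2 / φ) :=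
    Real.quadratic_le_exp_of_nonneg (by positivity)
  unfold etaX'
  rw [sub_neg, div_lt_div_iff₀ (by norm_num) (by positivity)]
  have hq : 0 < φ ^ 2 - 2 * φ + 2 := by nlinarith
  have h2 : (1 + 2 / φ + (2 / φ) ^ 2 / 2) * (φ ^ 2 - 2 * φ + 2) ≤
      Real.exp (2 / φ) * (φ ^ 2 - 2 * φ + 2) := by
    exact mul_le_mul_of_nonneg_right hexp hq.le
  have h3 : (1 + 2 / φ + (2 / φ) ^ 2 / 2) * (φ ^ 2 - 2 * φ + 2) = (φ ^ 4 + 4) / φ ^ 2 := by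
    field_simp
    ring
  rw [h3] at h2
  calc 1 * (2 * φ ^ 2) = 2 * φ ^ 2 := by ring
  _ < (φ ^ 4 + 4) / φ ^ 2 * 2 := by
      rw [div_mul_eq_mul_div, lt_div_iff₀ (by positivity)]
      nlinarith
  _ ≤ Real.exp (2 / φ) * (φ ^ 2 - 2 * φ + 2) * 2 := by linarith [h2]

lemma etaX_strictAnti : StrictAntiOn etaX (Set.Ioi (0 : ℝ)) := by
  refine strictAntiOn_of_deriv_neg (convex_Ioi 0) (fun x hx => (etaX_diff hx).continuousAt.continuousWithinAt) ?_
  intro x hx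
  rw [interior_Ioi] at hx
  rw [deriv_etaX_eq hx]
  exact etaX'_neg hx

lemma etaC_tendsto_atTop : Filter.Tendsto etaC Filter.atTop (nhds 0) := by
  have hexp : Filter.Tendsto (fun w : ℝ => Real.exp (2 / w)) Filter.atTop (nhds 1) := by
    simpa [Function.comp_def] using (Real.continuous_exp.tendsto 0).comp inv_tendsto0
  -- slope limit : (exp t - 1)/t → 1 as t → 0, t ≠ 0
  have hslope : Filter.Tendsto (fun t : ℝ => (Real.exp t - 1) / t)
      (nhdsWithin 0 {(0:ℝ)}ᶜ) (nhds 1) := by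
    have := (hasDerivAt_iff_tendsto_slope).1 (Real.hasDerivAt_exp 0)
    simp only [Real.exp_zero] at this
    refine this.congr (fun t => ?_)
    simp [slope_def_field, div_eq_mul_inv]
  have h2w : Filter.Tendsto (fun w : ℝ => 2 / w) Filter.atTop (nhdsWithin 0 {(0:ℝ)}ᶜ) := by
    rw [tendsto_nhdsWithin_iff]
    refine ⟨inv_tendsto0, ?_⟩
    filter_upwards [Filter.eventually_gt_atTop (0 : ℝ)] with w hw
    simp only [Set.mem_compl_iff, Set.mem_singleton_iff]
    positivity
  have hphi : Filter.Tendsto (fun w : ℝ => w * (1 - Real.exp (2 / w))) Filter.atTop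
      (nhds (-2)) := by
    have := (hslope.comp h2w).const_mul (-2 : ℝ)
    simp only [Function.comp] at this
    norm_num at this
    refine this.neg.congr' ?_
    filter_upwards [Filter.eventually_gt_atTop (0 : ℝ)] with w hw
    have hw0 : w ≠ 0 := hw.ne'
    field_simp
    ring
  have key : Filter.Tendsto (fun w : ℝ => (1 + w) * (1 - Real.exp (2 / w)) / 2 + Real.exp (2 / w))
      Filter.atTop (nhds 0) := by
    have h1 : Filter.Tendsto (fun w : ℝ => (1 - Real.exp (2 / w))) Filter.atTop (nhds 0) := by
      simpa using (tendsto_const_nhds (x := (1:ℝ)) (f := Filter.atTop)).sub hexp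
    have := (((h1.add hphi).div_const 2).add hexp)
    norm_num at this
    refine this.congr (fun w => ?_)
    ring
  refine key.congr (fun w => ?_)
  unfold etaC
  ring

lemma etaX_tendsto_atTop : Filter.Tendsto etaX Filter.atTop (nhds 0) := by
  refine etaC_tendsto_atTop.congr' ?_
  filter_upwards [Filter.eventually_gt_atTop (0 : ℝ)] with w hw
  exact (etaX_eq hw).symm

lemma etaX_pos {φ : ℝ} (hφ : 0 < φ) : 0 < etaX φ := by
  have hge : 0 ≤ etaX (φ + 1) := by
    refine le_of_tendsto etaX_tendsto_atTop ?_
    filter_upwards [Filter.eventually_ge_atTop (φ + 1)] with x hx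
    rcases eq_or_lt_of_le hx with rfl | hlt
    · exact le_rfl
    · exact (etaX_strictAnti (Set.mem_Ioi.2 (by linarith : (0:ℝ) < φ + 1))
        (Set.mem_Ioi.2 (by linarith)) hlt).le
  have := etaX_strictAnti (Set.mem_Ioi.2 hφ) (Set.mem_Ioi.2 (by linarith : (0:ℝ) < φ + 1))
    (by linarith)
  linarith

lemma etaX_tendsto_zero : Filter.Tendsto etaX (nhdsWithin 0 (Set.Ioi (0:ℝ))) Filter.atTop := by
  have hC : Filter.Tendsto etaC (nhdsWithin 0 (Set.Ioi (0:ℝ))) Filter.atTop := by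
    have hexp : Filter.Tendsto (fun w : ℝ => Real.exp (2 / w)) (nhdsWithin 0 (Set.Ioi (0:ℝ)))
        Filter.atTop := by
      have h2 : Filter.Tendsto (fun w : ℝ => 2 / w) (nhdsWithin 0 (Set.Ioi (0:ℝ)))
          Filter.atTop := by
        simpa [div_eq_mul_inv] using Filter.Tendsto.const_mul_atTop (by norm_num : (0:ℝ) < 2)
          tendsto_inv_nhdsGT_zero
      exact Real.tendsto_exp_atTop.comp h2
    have hcoef : Filter.Tendsto (fun w : ℝ => (1 - w) / 2) (nhdsWithin 0 (Set.Ioi (0:ℝ)))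
        (nhds (1/2 : ℝ)) := by
      have : Filter.Tendsto (fun w : ℝ => (1 - w) / 2) (nhds 0) (nhds ((1 - 0)/2 : ℝ)) := by
        exact Filter.Tendsto.div_const (tendsto_const_nhds.sub Filter.tendsto_id) 2
      norm_num at this
      exact this.mono_left nhdsWithin_le_nhds
    have hmul : Filter.Tendsto (fun w : ℝ => (1 - w) / 2 * Real.exp (2 / w))
        (nhdsWithin 0 (Set.Ioi (0:ℝ))) Filter.atTop :=
      Filter.Tendsto.pos_mul_atTop (by norm_num) hcoef hexp
    have hadd : Filter.Tendsto (fun w : ℝ => (1 + w) / 2) (nhdsWithin 0 (Set.Ioi (0:ℝ)))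
        (nhds (1/2 : ℝ)) := by
      have : Filter.Tendsto (fun w : ℝ => (1 + w) / 2) (nhds 0) (nhds ((1 + 0)/2 : ℝ)) :=
        Filter.Tendsto.div_const (tendsto_const_nhds.add Filter.tendsto_id) 2
      norm_num at this
      exact this.mono_left nhdsWithin_le_nhds
    have := Filter.Tendsto.add_atTop hadd hmul
    refine this.congr (fun w => ?_)
    unfold etaC
    ring
  refine hC.congr' ?_
  filter_upwards [self_mem_nhdsWithin] with x hx
  exact (etaX_eq hx).symm

/-- Properties of `η = η_X`:
(i) the defining integral converges for every `φ > 0`;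
(ii) `η` is twice differentiable on `(0,∞)` and satisfies
`(1/2) φ² η'' + (1+φ) η' = η` there;
(iii) `η` is strictly positive and strictly decreasing on `(0,∞)`;
(iv) `η(φ) → 0` as `φ → ∞` and `η(φ) → ∞` as `φ → 0+`. -/
theorem etaX_properties :
    (∀ φ : ℝ, 0 < φ →
      IntegrableOn (fun w : ℝ => Real.exp (2 / w) / (w ^ 2 * (1 + w) ^ 2))
        (Set.Ioi φ)) ∧
    (∀ φ : ℝ, 0 < φ → DifferentiableAt ℝ etaX φ) ∧
    (∀ φ : ℝ, 0 < φ → DifferentiableAt ℝ (deriv etaX) φ) ∧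
    (∀ φ : ℝ, 0 < φ →
      1 / 2 * φ ^ 2 * deriv (deriv etaX) φ + (1 + φ) * deriv etaX φ = etaX φ) ∧
    (∀ φ : ℝ, 0 < φ → 0 < etaX φ) ∧
    StrictAntiOn etaX (Set.Ioi (0 : ℝ)) ∧
    Filter.Tendsto etaX Filter.atTop (nhds 0) ∧
    Filter.Tendsto etaX (nhdsWithin 0 (Set.Ioi (0 : ℝ))) Filter.atTop := by
  exact ⟨fun _ h => g_integrableOn h, fun _ h => etaX_diff h, fun _ h => deriv_etaX_diff h,
    fun _ h => etaX_ode h, fun _ h => etaX_pos h, etaX_strictAnti, etaX_tendsto_atTop,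
    etaX_tendsto_zero⟩
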